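/- Let R be a set of atoms of Π(X) whose associated graph G_R is a single cycle with m ≥ 3 edges. Then the number of distinct partitions of X expressible as the join of some subset of R equals 2^m − m. -/

import Mathlib

set_option linter.unusedSectionVars false
set_option maxHeartbeats 1000000

section GraphLemmas

namespace SimpleGraph
variable {V : Type*} [DecidableEq V] {G : SimpleGraph V}

lemma mem_support_of_mem_edges' {u v x : V} (p : G.Walk u v) {e : Sym2 V}
    (he : e ∈ p.edges) (hx : x ∈ e) : x ∈ p.support := by
  induction e with
  | _ a b =>
    rcases Sym2.mem_iff.mp hx with rfl | rfl
    · exact p.fst_mem_support_of_mem_edges he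
    · exact p.snd_mem_support_of_mem_edges he

lemma edges_getElem_eq {u v : V} (p : G.Walk u v) (i : ℕ) (hi : i < p.length) :
    p.edges[i]'(by rwa [p.length_edges]) = s(p.getVert i, p.getVert (i + 1)) := by
  induction p generalizing i with
  | nil => simp at hi
  | cons h q ih =>
    cases i with
    | zero => simp [Walk.getVert_zero, Walk.getVert_cons_succ]
    | succ n =>
      have hn : n < q.length := by simpa [Walk.length_cons] using hi
      simpa [Walk.edges_cons, Walk.getVert_cons_succ] using ih n hn

lemma unique_edge_at_start {u v : V} {p : G.Walk u v} (h : p.support.Nodup) {e : Sym2 V}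
    (he : e ∈ p.edges) (hu : u ∈ e) : e = s(u, p.getVert 1) := by
  induction p with
  | nil => simp at he
  | cons hadj q ih =>
    rw [Walk.support_cons, List.nodup_cons] at h
    rw [Walk.edges_cons, List.mem_cons] at he
    rcases he with rfl | he
    · rw [show (Walk.cons hadj q).getVert 1 = q.getVert 0 from rfl, Walk.getVert_zero]
    · exact absurd (mem_support_of_mem_edges' q he hu) h.1

lemma head_edge_mem {u v : V} (p : G.Walk u v) (hp : ¬ p.Nil) :
    s(u, p.getVert 1) ∈ p.edges := by
  cases p with
  | nil => simp at hp
  | cons hadj q => rw [show (Walk.cons hadj q).getVert 1 = q.getVert 0 from rfl, Walk.getVert_zero]; simp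

/-- At a support vertex of a cycle, there are two distinct incident edges of the cycle. -/
lemma cycle_two_edges_at {u x : V} {p : G.Walk u u} (hp : p.IsCycle) (hx : x ∈ p.support) :
    ∃ e₁ e₂, e₁ ∈ p.edges ∧ e₂ ∈ p.edges ∧ e₁ ≠ e₂ ∧ x ∈ e₁ ∧ x ∈ e₂ := by
  have hrot := p.rotate_edges x hx
  have hq : (p.rotate x hx).IsCycle := hp.rotate hx
  set q := p.rotate x hx with hqdef
  have hmem : ∀ e, e ∈ q.edges → e ∈ p.edges := fun e he => hrot.mem_iff.mp he
  have hnil : ¬ q.Nil := hq.not_nil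
  have hlen : 3 ≤ q.length := hq.three_le_length
  refine ⟨s(x, q.getVert 1), s(x, q.reverse.getVert 1), hmem _ (head_edge_mem q hnil),
      ?_, ?_, Sym2.mem_mk_left _ _, Sym2.mem_mk_left _ _⟩
  · have := head_edge_mem q.reverse (by
      rw [Walk.nil_iff_length_eq] at hnil ⊢
      rwa [Walk.length_reverse])
    rw [Walk.edges_reverse, List.mem_reverse] at this
    exact hmem _ this
  · have h1 : s(x, q.getVert 1) = q.edges[0]'(by rw [q.length_edges]; omega) := by
      rw [edges_getElem_eq q 0 (by omega), Walk.getVert_zero]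
    have h2 : s(x, q.reverse.getVert 1) = q.edges[q.length - 1]'(by rw [q.length_edges]; omega) := by
      rw [Walk.getVert_reverse, edges_getElem_eq q (q.length - 1) (by omega)]
      have : q.length - 1 + 1 = q.length := by omega
      rw [this, Walk.getVert_length, Sym2.eq_swap]
    rw [h1, h2]
    intro hcontra
    have := (hp.rotate hx).isTrail.edges_nodup.getElem_inj_iff.mp hcontra
    omega

/-- No vertex of a cycle has three distinct incident edges of the cycle. -/
lemma cycle_not_three_edges_at {u x : V} {p : G.Walk u u} (hp : p.IsCycle)
    {e₁ e₂ e₃ : Sym2 V} (h1 : e₁ ∈ p.edges) (h2 : e₂ ∈ p.edges) (h3 : e₃ ∈ p.edges)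
    (h12 : e₁ ≠ e₂) (h13 : e₁ ≠ e₃) (h23 : e₂ ≠ e₃)
    (hx1 : x ∈ e₁) (hx2 : x ∈ e₂) (hx3 : x ∈ e₃) : False := by
  have hx : x ∈ p.support := mem_support_of_mem_edges' p h1 hx1
  have hrot := p.rotate_edges x hx
  have hq : (p.rotate x hx).IsCycle := hp.rotate hx
  set q := p.rotate x hx with hqdef
  have hmem : ∀ e, e ∈ p.edges → e ∈ q.edges := fun e he => hrot.mem_iff.mpr he
  have h1' : e₁ ∈ q.edges := hmem _ h1
  have h2' : e₂ ∈ q.edges := hmem _ h2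
  have h3' : e₃ ∈ q.edges := hmem _ h3
  clear_value q
  clear hrot hx hqdef hp h1 h2 h3 hmem
  cases q with
  | nil => exact hq.not_of_nil
  | cons hadj r =>
    rename_i b
    have hnd : r.support.Nodup := by
      have := hq.support_nodup
      rwa [Walk.support_cons, List.tail_cons] at this
    have huniq : ∀ e, e ∈ (Walk.cons hadj r).edges → x ∈ e →
        e = s(x, b) ∨ e = s(x, r.reverse.getVert 1) := by
      intro e he hxe
      rw [Walk.edges_cons, List.mem_cons] at he
      rcases he with rfl | he
      · left; rfl
      · right
        have hr : e ∈ r.reverse.edges := by rw [Walk.edges_reverse, List.mem_reverse]; exact he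
        exact unique_edge_at_start
          (by rw [Walk.support_reverse]; exact List.nodup_reverse.mpr hnd) hr hxe
    have u1 := huniq e₁ h1' hx1
    have u2 := huniq e₂ h2' hx2
    have u3 := huniq e₃ h3' hx3
    rcases u1 with rfl | rfl <;> rcases u2 with rfl | rfl <;> rcases u3 with rfl | rfl <;>
      simp_all

/-- If the edge set of `G` is exactly the edges of a cycle `c`, then every cycle in `G`
uses every edge of `G`. -/
lemma cycle_edges_all {v : V} {c : G.Walk v v} (hc : c.IsCycle)
    (hE : G.edgeSet = {e | e ∈ c.edges}) {u : V} {p : G.Walk u u} (hp : p.IsCycle)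
    {e : Sym2 V} (he : e ∈ G.edgeSet) : e ∈ p.edges := by
  classical
  by_contra hout
  set m := c.length with hm
  have hm3 : 3 ≤ m := hc.three_le_length
  set g : ℕ → Prop := fun i => s(c.getVert i, c.getVert (i + 1)) ∈ p.edges with hg
  have hex : ∃ i, i < m ∧ g i := by
    have hnil : ¬ p.Nil := hp.not_nil
    have he0 : s(u, p.getVert 1) ∈ p.edges := head_edge_mem p hnil
    have : s(u, p.getVert 1) ∈ c.edges := by
      have := p.edges_subset_edgeSet he0
      rwa [hE] at this
    obtain ⟨i, hi, hieq⟩ := List.mem_iff_getElem.mp this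
    rw [c.length_edges] at hi
    refine ⟨i, hi, ?_⟩
    show s(c.getVert i, c.getVert (i + 1)) ∈ p.edges
    rw [← edges_getElem_eq c i hi, hieq]
    exact he0
  have hnex : ∃ j, j < m ∧ ¬ g j := by
    have : e ∈ c.edges := by rwa [hE] at he
    obtain ⟨j, hj, hjeq⟩ := List.mem_iff_getElem.mp this
    rw [c.length_edges] at hj
    refine ⟨j, hj, ?_⟩
    show s(c.getVert j, c.getVert (j + 1)) ∉ p.edges
    rw [← edges_getElem_eq c j hj, hjeq]
    exact hout
  have hswitch : ∃ i, i < m ∧ ¬ (g i ↔ g ((i + 1) % m)) := by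
    by_contra hcon
    push_neg at hcon
    have hconst : ∀ k, k < m → (g 0 ↔ g k) := by
      intro k
      induction k with
      | zero => intro _; rfl
      | succ n ih =>
        intro hn
        have hnm : n < m := by omega
        have := hcon n hnm
        rw [Nat.mod_eq_of_lt hn] at this
        exact (ih hnm).trans this
    obtain ⟨i, hi, hgi⟩ := hex
    obtain ⟨j, hj, hgj⟩ := hnex
    exact hgj (((hconst i hi).symm.trans (hconst j hj)).mp hgi)
  obtain ⟨i, hi, hne⟩ := hswitch
  set x := c.getVert ((i + 1) % m) with hx
  set eA := s(c.getVert i, c.getVert (i + 1)) with heA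
  set eB := s(c.getVert ((i + 1) % m), c.getVert ((i + 1) % m + 1)) with heB
  have hxA : x ∈ eA := by
    rcases Nat.lt_or_ge (i + 1) m with h | h
    · rw [hx, Nat.mod_eq_of_lt h]; exact Sym2.mem_mk_right _ _
    · have him : i + 1 = m := by omega
      have : x = c.getVert (i + 1) := by
        rw [hx, him, Nat.mod_self, Walk.getVert_zero]
        exact c.getVert_length.symm
      rw [this]; exact Sym2.mem_mk_right _ _
  have hxB : x ∈ eB := Sym2.mem_mk_left _ _
  have hAB : eA ≠ eB := by
    have hA' : eA = c.edges[i]'(by rw [c.length_edges]; omega) := (edges_getElem_eq c i hi).symm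
    have hmod : (i + 1) % m < m := Nat.mod_lt _ (by omega)
    have hB' : eB = c.edges[(i + 1) % m]'(by rw [c.length_edges]; omega) :=
      (edges_getElem_eq c _ hmod).symm
    rw [hA', hB']
    intro hcontra
    have := hc.isTrail.edges_nodup.getElem_inj_iff.mp hcontra
    rcases Nat.lt_or_ge (i + 1) m with h | h
    · rw [Nat.mod_eq_of_lt h] at this; omega
    · have him : i + 1 = m := by omega
      rw [him, Nat.mod_self] at this; omega
  have hAc : eA ∈ c.edges := by
    rw [heA, ← edges_getElem_eq c i hi]; exact List.getElem_mem _
  have hBc : eB ∈ c.edges := by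
    have hmod : (i + 1) % m < m := Nat.mod_lt _ (by omega)
    rw [heB, ← edges_getElem_eq c _ hmod]; exact List.getElem_mem _
  have hcases : (eA ∈ p.edges ∧ eB ∉ p.edges) ∨ (eA ∉ p.edges ∧ eB ∈ p.edges) := by
    have hgA : g i ↔ eA ∈ p.edges := Iff.rfl
    have hgB : g ((i + 1) % m) ↔ eB ∈ p.edges := Iff.rfl
    tauto
  obtain ⟨eIn, ⟨hIn, hxIn⟩, eOut, hOutn, hOutc, hxOut⟩ :
      ∃ eIn, (eIn ∈ p.edges ∧ x ∈ eIn) ∧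
        ∃ eOut, (eOut ∉ p.edges ∧ eOut ∈ c.edges ∧ x ∈ eOut) := by
    rcases hcases with ⟨h1, h2⟩ | ⟨h1, h2⟩
    · exact ⟨eA, ⟨h1, hxA⟩, eB, h2, hBc, hxB⟩
    · exact ⟨eB, ⟨h2, hxB⟩, eA, h1, hAc, hxA⟩
  have hxp : x ∈ p.support := mem_support_of_mem_edges' p hIn hxIn
  obtain ⟨a₁, a₂, ha1, ha2, ha12, hxa1, hxa2⟩ := cycle_two_edges_at hp hxp
  have ha1c : a₁ ∈ c.edges := by have := p.edges_subset_edgeSet ha1; rwa [hE] at this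
  have ha2c : a₂ ∈ c.edges := by have := p.edges_subset_edgeSet ha2; rwa [hE] at this
  exact cycle_not_three_edges_at hc ha1c ha2c hOutc ha12
    (fun h => hOutn (h ▸ ha1)) (fun h => hOutn (h ▸ ha2)) hxa1 hxa2 hxOut

end SimpleGraph

/-- Cardinality of the set of subsets of a finite set. -/
lemma Set.ncard_subsets {α : Type*} {R : Set α} (h : R.Finite) :
    {T | T ⊆ R}.ncard = 2 ^ R.ncard := by
  classical
  have himg : {T | T ⊆ R} = (fun t : Finset α => (↑t : Set α)) '' ↑h.toFinset.powerset := by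
    ext T
    simp only [Set.mem_setOf_eq, Set.mem_image]
    constructor
    · intro hT
      have hTfin : T.Finite := h.subset hT
      refine ⟨hTfin.toFinset, ?_, hTfin.coe_toFinset⟩
      rw [Finset.mem_coe, Finset.mem_powerset]
      intro a ha
      rw [Set.Finite.mem_toFinset] at ha ⊢
      exact hT ha
    · rintro ⟨t, ht, rfl⟩
      rw [Finset.mem_coe, Finset.mem_powerset] at ht
      intro a ha
      have := ht (by exact_mod_cast ha)
      rwa [Set.Finite.mem_toFinset] at this
  have hcard : h.toFinset.card = R.ncard := by
    rw [← Set.ncard_coe_finset, h.coe_toFinset]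
  rw [himg, Set.ncard_image_of_injective _ Finset.coe_injective, Set.ncard_coe_finset,
    Finset.card_powerset, hcard]

end GraphLemmas

variable {X : Type*} [Fintype X] [DecidableEq X]

/-- The atom of the partition lattice whose only nonsingleton block is `{x, y}`. -/
def pairSetoid (x y : X) : Setoid X where
  r a b := a = b ∨ (a = x ∧ b = y) ∨ (a = y ∧ b = x)
  iseqv := by
    refine ⟨fun a => Or.inl rfl, ?_, ?_⟩
    · intro a b h; tauto
    · intro a b c h1 h2; aesop

/-- `S` is an atomic decomposition of the partition `π`. -/
def IsAtomicDecomp (π : Setoid X) (S : Set (Setoid X)) : Prop :=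
  (∀ a ∈ S, IsAtom a) ∧ sSup S = π

/-- `S` is a minimal atomic decomposition of `π`. -/
def IsMinAtomicDecomp (π : Setoid X) (S : Set (Setoid X)) : Prop :=
  IsAtomicDecomp π S ∧ ∀ T ⊂ S, ¬ IsAtomicDecomp π T

/-- `𝔑 π`: the number of minimal atomic decompositions of `π`. -/
noncomputable def numMinDecomp (π : Setoid X) : ℕ :=
  {S | IsMinAtomicDecomp π S}.ncard

/-- The graph on `X` whose edges are the nonsingleton blocks of the atoms in `S`. -/
def atomGraph (S : Set (Setoid X)) : SimpleGraph X where
  Adj a b := a ≠ b ∧ pairSetoid a b ∈ S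
  symm := by
    constructor
    intro a b ⟨h1, h2⟩
    refine ⟨h1.symm, ?_⟩
    have h : pairSetoid b a = pairSetoid a b := by
      apply Setoid.ext; intro u v
      show _ ∨ _ ↔ _ ∨ _; tauto
    rw [h]; exact h2
  loopless := by constructor; intro a ⟨h, _⟩; exact h rfl

lemma pairSetoid_rel {x y a b : X} :
    (pairSetoid x y) a b ↔ (a = b ∨ (a = x ∧ b = y) ∨ (a = y ∧ b = x)) := Iff.rfl

lemma pairSetoid_comm (x y : X) : pairSetoid x y = pairSetoid y x := by
  apply Setoid.ext; intro a b; rw [pairSetoid_rel, pairSetoid_rel]; tauto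

lemma pairSetoid_le {x y : X} {s : Setoid X} (h : s x y) : pairSetoid x y ≤ s := by
  intro a b hab
  rcases hab with rfl | ⟨rfl, rfl⟩ | ⟨rfl, rfl⟩
  · exact s.refl _
  · exact h
  · exact s.symm h

lemma pairSetoid_ne_bot {x y : X} (h : x ≠ y) : pairSetoid x y ≠ ⊥ := by
  intro hb
  have : (pairSetoid x y) x y := Or.inr (Or.inl ⟨rfl, rfl⟩)
  rw [hb] at this
  exact h this

lemma isAtom_eq_pair {s : Setoid X} (h : IsAtom s) :
    ∃ x y, x ≠ y ∧ s = pairSetoid x y := by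
  have hbot := h.1
  have : ∃ x y, x ≠ y ∧ s x y := by
    by_contra hc
    push_neg at hc
    apply hbot
    apply Setoid.ext; intro a b
    constructor
    · intro hab
      by_contra hne
      exact (hc a b hne) hab
    · rintro rfl; exact s.refl _
  obtain ⟨x, y, hxy, hsxy⟩ := this
  refine ⟨x, y, hxy, ?_⟩
  rcases eq_or_ne (pairSetoid x y) s with heq | hne
  · exact heq.symm
  · exact absurd (h.2 _ (lt_of_le_of_ne (pairSetoid_le hsxy) hne)) (pairSetoid_ne_bot hxy)

lemma pairSetoid_eq_sym2 {x y a b : X} (hxy : x ≠ y) (hp : pairSetoid x y = pairSetoid a b) :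
    s(x, y) = s(a, b) := by
  have : (pairSetoid a b) x y := by rw [← hp]; exact Or.inr (Or.inl ⟨rfl, rfl⟩)
  rcases this with h | ⟨rfl, rfl⟩ | ⟨rfl, rfl⟩
  · exact absurd h hxy
  · rfl
  · exact Sym2.eq_swap

lemma sym2_eq_pairSetoid {x y a b : X} (h : s(x, y) = s(a, b)) :
    pairSetoid x y = pairSetoid a b := by
  rw [Sym2.eq_iff] at h
  rcases h with ⟨rfl, rfl⟩ | ⟨rfl, rfl⟩
  · rfl
  · exact pairSetoid_comm x y

lemma atomGraph_mono {S T : Set (Setoid X)} (h : S ⊆ T) : atomGraph S ≤ atomGraph T := by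
  intro a b ⟨h1, h2⟩; exact ⟨h1, h h2⟩

lemma sSup_rel_iff_reachable {T : Set (Setoid X)} (hT : ∀ s ∈ T, IsAtom s) {a b : X} :
    (sSup T) a b ↔ (atomGraph T).Reachable a b := by
  constructor
  · intro h
    rw [Setoid.sSup_eq_eqvGen] at h
    induction h with
    | rel u w h =>
      obtain ⟨s, hs, hsr⟩ := h
      obtain ⟨x, y, hxy, rfl⟩ := isAtom_eq_pair (hT s hs)
      rcases hsr with rfl | ⟨rfl, rfl⟩ | ⟨rfl, rfl⟩
      · exact SimpleGraph.Reachable.refl _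
      · exact SimpleGraph.Adj.reachable ⟨hxy, hs⟩
      · exact SimpleGraph.Adj.reachable ⟨hxy.symm, by rwa [pairSetoid_comm]⟩
    | refl u => exact SimpleGraph.Reachable.refl _
    | symm u w _ ih => exact ih.symm
    | trans u w z _ _ ih1 ih2 => exact ih1.trans ih2
  · intro ⟨p⟩
    induction p with
    | nil => exact (sSup T).refl _
    | cons h q ih =>
      refine (sSup T).trans ?_ ih
      exact Setoid.le_def.mp (le_sSup h.2) (Or.inr (Or.inl ⟨rfl, rfl⟩))

lemma reach_del {R : Set (Setoid X)} {v : X} {c : (atomGraph R).Walk v v}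
    (hc : c.IsCycle) (hE : (atomGraph R).edgeSet = {e | e ∈ c.edges})
    {x y : X} (hxy : x ≠ y) (hmem : pairSetoid x y ∈ R) :
    (atomGraph (R \ {pairSetoid x y})).Reachable x y := by
  have hadj : (atomGraph R).Adj x y := ⟨hxy, hmem⟩
  have hecy : s(x, y) ∈ c.edges := by
    have : s(x, y) ∈ (atomGraph R).edgeSet := hadj
    rwa [hE] at this
  have hkey := (SimpleGraph.adj_and_reachable_delete_edges_iff_exists_cycle).mpr ⟨v, c, hc, hecy⟩
  refine hkey.2.mono ?_
  intro a b hab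
  rw [SimpleGraph.deleteEdges, SimpleGraph.sdiff_adj, SimpleGraph.fromEdgeSet_adj] at hab
  obtain ⟨⟨hne, hmem'⟩, hns⟩ := hab
  refine ⟨hne, hmem', ?_⟩
  intro hs
  rw [Set.mem_singleton_iff] at hs
  exact hns ⟨Set.mem_singleton_iff.mpr (pairSetoid_eq_sym2 hne hs), hne⟩

lemma no_reach {R : Set (Setoid X)} (hR : ∀ a ∈ R, IsAtom a) {v : X}
    {c : (atomGraph R).Walk v v}
    (hc : c.IsCycle) (hE : (atomGraph R).edgeSet = {e | e ∈ c.edges})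
    {T : Set (Setoid X)} (hT : T ⊆ R)
    {x y : X} (hxy : x ≠ y) (hmemR : pairSetoid x y ∈ R) (hnot : pairSetoid x y ∉ T)
    {s' : Setoid X} (hs'R : s' ∈ R) (hs'T : s' ∉ T) (hs's : s' ≠ pairSetoid x y) :
    ¬ (atomGraph T).Reachable x y := by
  intro hreach
  set G'' := atomGraph (insert (pairSetoid x y) T) with hG''
  have hadj : G''.Adj x y := ⟨hxy, Set.mem_insert _ _⟩
  have hreach' : (G'' \ SimpleGraph.fromEdgeSet {s(x, y)}).Reachable x y := by
    refine hreach.mono ?_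
    intro a b hab
    obtain ⟨hne, hmem⟩ := hab
    rw [SimpleGraph.sdiff_adj, SimpleGraph.fromEdgeSet_adj]
    refine ⟨⟨hne, Set.mem_insert_of_mem _ hmem⟩, ?_⟩
    rintro ⟨hs, -⟩
    rw [Set.mem_singleton_iff] at hs
    exact hnot (sym2_eq_pairSetoid hs ▸ hmem)
  obtain ⟨u, p, hpc, hep⟩ :=
    SimpleGraph.adj_and_reachable_delete_edges_iff_exists_cycle.mp ⟨hadj, hreach'⟩
  have hsub : ∀ e ∈ p.edges, e ∈ (atomGraph R).edgeSet := by
    intro e he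
    exact SimpleGraph.edgeSet_mono (atomGraph_mono (Set.insert_subset hmemR hT))
      (p.edges_subset_edgeSet he)
  have hpc' := hpc.transfer hsub
  obtain ⟨x', y', hx'y', rfl⟩ := isAtom_eq_pair (hR s' hs'R)
  have hedge : s(x', y') ∈ (atomGraph R).edgeSet := ⟨hx'y', hs'R⟩
  have hmm := SimpleGraph.cycle_edges_all hc hE hpc' hedge
  rw [SimpleGraph.Walk.edges_transfer] at hmm
  have hadj'' : G''.Adj x' y' := (SimpleGraph.mem_edgeSet G'').mp (p.edges_subset_edgeSet hmm)
  obtain ⟨-, hmem⟩ := hadj''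
  rcases hmem with heq | hmemT
  · exact hs's heq
  · exact hs'T hmemT

/-- If the graph of a set `R` of atoms is a single cycle with `m ≥ 3` edges,
then the number of partitions expressible as the join of a subset of `R` equals `2^m - m`. -/
theorem joins_of_cycle (R : Set (Setoid X)) (m : ℕ) (hm3 : 3 ≤ m)
    (hR : ∀ a ∈ R, IsAtom a)
    (hcycle : ∃ (v : X) (c : (atomGraph R).Walk v v), c.IsCycle ∧ c.length = m ∧
      (atomGraph R).edgeSet = {e | e ∈ c.edges})
    (hm : (atomGraph R).edgeSet.ncard = m) :
    {π : Setoid X | ∃ T ⊆ R, sSup T = π}.ncard = 2 ^ m - m := by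
  classical
  obtain ⟨v, c, hc, hclen, hE⟩ := hcycle
  -- `R` is finite of cardinality `m`
  set φ : Sym2 X → Setoid X :=
    Sym2.lift ⟨fun x y => pairSetoid x y, fun x y => pairSetoid_comm x y⟩ with hφ
  have himg : φ '' (atomGraph R).edgeSet = R := by
    ext s
    constructor
    · rintro ⟨e, he, rfl⟩
      induction e with
      | _ a b =>
        have := (SimpleGraph.mem_edgeSet (atomGraph R)).mp he
        simpa [hφ] using this.2
    · intro hs
      obtain ⟨x, y, hxy, rfl⟩ := isAtom_eq_pair (hR s hs)
      exact ⟨s(x, y), ⟨hxy, hs⟩, by simp [hφ]⟩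
  have hinjφ : Set.InjOn φ (atomGraph R).edgeSet := by
    intro e1 h1 e2 h2 heq
    induction e1 with
    | _ a b =>
      induction e2 with
      | _ a' b' =>
        have hab : a ≠ b := ((SimpleGraph.mem_edgeSet (atomGraph R)).mp h1).1
        simp only [hφ, Sym2.lift_mk] at heq
        exact pairSetoid_eq_sym2 hab heq
  have hRfin : R.Finite := by
    rw [← himg]; exact (Set.toFinite _).image φ
  have hRcard : R.ncard = m := by
    rw [← himg, Set.ncard_image_of_injOn hinjφ, hm]
  set F : Set (Set (Setoid X)) := {T | T ⊆ R} with hF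
  have hFfin : F.Finite := hRfin.finite_subsets
  have hFcard : F.ncard = 2 ^ m := by rw [hF, Set.ncard_subsets hRfin, hRcard]
  set Big : Set (Set (Setoid X)) := insert R ((fun s => R \ {s}) '' R) with hBig
  have hBigF : Big ⊆ F := by
    intro T hT
    rw [hBig, Set.mem_insert_iff, Set.mem_image] at hT
    rcases hT with rfl | ⟨s, hs, rfl⟩
    · exact fun x hx => hx
    · exact fun x hx => hx.1
  have hBigcard : Big.ncard = m + 1 := by
    have himginj : Set.InjOn (fun s => R \ {s}) R := by
      intro s hs t ht hst
      by_contra hne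
      simp only at hst
      have hmem : s ∈ R \ {t} := ⟨hs, by simpa using hne⟩
      rw [← hst] at hmem
      exact hmem.2 rfl
    have hRnot : R ∉ (fun s => R \ {s}) '' R := by
      rintro ⟨s, hs, heq⟩
      simp only at heq
      rw [← heq] at hs
      exact hs.2 rfl
    rw [hBig, Set.ncard_insert_of_notMem hRnot (hRfin.image _),
      Set.ncard_image_of_injOn himginj, hRcard]
  have hAtoms : ∀ T, T ⊆ R → ∀ s ∈ T, IsAtom s := fun T hT s hs => hR s (hT hs)
  -- removing a single atom from `R` does not change the join
  have key1 : ∀ s ∈ R, sSup (R \ {s}) = sSup R := by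
    intro s hs
    refine le_antisymm (sSup_le_sSup Set.diff_subset) (sSup_le ?_)
    intro t ht
    rcases eq_or_ne t s with rfl | hne
    · obtain ⟨x, y, hxy, rfl⟩ := isAtom_eq_pair (hR t ht)
      apply pairSetoid_le
      rw [sSup_rel_iff_reachable (hAtoms _ Set.diff_subset)]
      exact reach_del hc hE hxy hs
    · exact le_sSup ⟨ht, hne⟩
  -- a set missing two atoms cannot relate the endpoints of a missing atom
  have keyA : ∀ T, T ⊆ R → ∀ x y : X, x ≠ y → pairSetoid x y ∈ R → pairSetoid x y ∉ T →
      (∃ s' ∈ R, s' ∉ T ∧ s' ≠ pairSetoid x y) → ¬ (sSup T) x y := by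
    intro T hT x y hxy hmemR hnot hex hrel
    obtain ⟨s', hs'R, hs'T, hs's⟩ := hex
    rw [sSup_rel_iff_reachable (hAtoms T hT)] at hrel
    exact no_reach hR hc hE hT hxy hmemR hnot hs'R hs'T hs's hrel
  have missing2 : ∀ T ∈ F \ Big, ∃ x y : X, x ≠ y ∧ pairSetoid x y ∈ R ∧ pairSetoid x y ∉ T ∧
      ∃ s' ∈ R, s' ∉ T ∧ s' ≠ pairSetoid x y := by
    intro T hTFB
    obtain ⟨hTF, hTB⟩ := hTFB
    have hTR : T ⊆ R := hTF
    have hTneR : T ≠ R := fun h => hTB (by rw [hBig, h]; exact Set.mem_insert _ _)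
    obtain ⟨s, hsR, hsT⟩ : ∃ s ∈ R, s ∉ T := by
      by_contra h; push_neg at h; exact hTneR (Set.Subset.antisymm hTR h)
    have hTsub : T ⊆ R \ {s} := fun t ht =>
      ⟨hTR ht, fun h2 => hsT (Set.mem_singleton_iff.mp h2 ▸ ht)⟩
    have hTne2 : T ≠ R \ {s} := fun h =>
      hTB (by rw [hBig]; exact Set.mem_insert_iff.mpr (Or.inr ⟨s, hsR, h.symm⟩))
    obtain ⟨s', hs'mem, hs'T⟩ : ∃ s', s' ∈ R \ {s} ∧ s' ∉ T := by
      by_contra h; push_neg at h; exact hTne2 (Set.Subset.antisymm hTsub h)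
    obtain ⟨x, y, hxy, rfl⟩ := isAtom_eq_pair (hR s hsR)
    exact ⟨x, y, hxy, hsR, hsT, s', hs'mem.1, hs'T, by simpa using hs'mem.2⟩
  have hne_top : ∀ T ∈ F \ Big, sSup T ≠ sSup R := by
    intro T hTFB heq
    obtain ⟨x, y, hxy, hmemR, hnot, hex⟩ := missing2 T hTFB
    have hrel : (sSup R) x y := Setoid.le_def.mp (le_sSup hmemR) (Or.inr (Or.inl ⟨rfl, rfl⟩))
    rw [← heq] at hrel
    exact keyA T hTFB.1 x y hxy hmemR hnot hex hrel
  have hsubset_of_eq : ∀ T ∈ F \ Big, ∀ T' ∈ F \ Big, sSup T = sSup T' → T ⊆ T' := by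
    intro T hT T' hT' heq s hsT
    by_contra hsT'
    have hsR : s ∈ R := hT.1 hsT
    obtain ⟨x, y, hxy, rfl⟩ := isAtom_eq_pair (hR s hsR)
    have hrel : (sSup T) x y := Setoid.le_def.mp (le_sSup hsT) (Or.inr (Or.inl ⟨rfl, rfl⟩))
    rw [heq] at hrel
    have hT'sub : T' ⊆ R \ {pairSetoid x y} := fun t ht =>
      ⟨hT'.1 ht, fun h2 => hsT' (Set.mem_singleton_iff.mp h2 ▸ ht)⟩
    have hT'ne : T' ≠ R \ {pairSetoid x y} := fun h =>
      hT'.2 (by rw [hBig]; exact Set.mem_insert_iff.mpr (Or.inr ⟨_, hsR, h.symm⟩))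
    obtain ⟨s', hs'mem, hs'T'⟩ : ∃ s', s' ∈ R \ {pairSetoid x y} ∧ s' ∉ T' := by
      by_contra h; push_neg at h; exact hT'ne (Set.Subset.antisymm hT'sub h)
    exact keyA T' hT'.1 x y hxy hsR hsT'
      ⟨s', hs'mem.1, hs'T', by simpa using hs'mem.2⟩ hrel
  have hinjOn : Set.InjOn sSup (F \ Big) := fun T hT T' hT' heq =>
    Set.Subset.antisymm (hsubset_of_eq T hT T' hT' heq) (hsubset_of_eq T' hT' T hT heq.symm)
  have hset : {π : Setoid X | ∃ T ⊆ R, sSup T = π} = sSup '' (F \ Big) ∪ {sSup R} := by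
    ext π
    simp only [Set.mem_setOf_eq, Set.mem_union, Set.mem_image, Set.mem_singleton_iff]
    constructor
    · rintro ⟨T, hT, rfl⟩
      by_cases hB : T ∈ Big
      · right
        rw [hBig, Set.mem_insert_iff, Set.mem_image] at hB
        rcases hB with rfl | ⟨s, hs, rfl⟩
        · rfl
        · exact key1 s hs
      · left; exact ⟨T, ⟨hT, hB⟩, rfl⟩
    · rintro (⟨T, ⟨hT, -⟩, rfl⟩ | rfl)
      · exact ⟨T, hT, rfl⟩
      · exact ⟨R, subset_rfl, rfl⟩
  have hdisj : Disjoint (sSup '' (F \ Big)) {sSup R} := by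
    rw [Set.disjoint_singleton_right]
    rintro ⟨T, hT, heq⟩
    exact hne_top T hT heq
  have hfin1 : (sSup '' (F \ Big)).Finite := (hFfin.subset Set.diff_subset).image _
  have hcount : {π : Setoid X | ∃ T ⊆ R, sSup T = π}.ncard = (F \ Big).ncard + 1 := by
    rw [hset, Set.ncard_union_eq hdisj hfin1 (Set.finite_singleton _),
      Set.ncard_image_of_injOn hinjOn, Set.ncard_singleton]
  rw [hcount, Set.ncard_diff hBigF (hFfin.subset hBigF), hFcard, hBigcard]
  have hlt : m < 2 ^ m := Nat.lt_two_pow_self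
  omega
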